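/- A bounded operator A on a complex Hilbert space H is quasinormal if and only if A^{*k} A^k = (A*A)^k for all nonnegative integers k. -/
import Mathlib

open ContinuousLinearMap

/-- A bounded operator is quasinormal if it commutes with `A*A`. -/
def Quasinormal {H : Type*} [NormedAddCommGroup H] [InnerProductSpace ℂ H] [CompleteSpace H]
    (A : H →L[ℂ] H) : Prop :=
  A * (adjoint A * A) = (adjoint A * A) * A

/-- Embry's characterization: `A` is quasinormal iff `A^{*k} A^k = (A*A)^k` for all `k`. -/
theorem quasinormal_iff_embry
    {H : Type*} [NormedAddCommGroup H] [InnerProductSpace ℂ H] [CompleteSpace H]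
    (A : H →L[ℂ] H) :
    Quasinormal A ↔ ∀ k : ℕ, (adjoint A) ^ k * A ^ k = (adjoint A * A) ^ k := by
  set T := adjoint A * A with hT
  constructor
  · intro h k
    have hcomm : ∀ k : ℕ, A * T ^ k = T ^ k * A := by
      intro k
      induction k with
      | zero => simp
      | succ n ih =>
        rw [pow_succ', ← mul_assoc, h, mul_assoc, ih, ← mul_assoc]
    induction k with
    | zero => simp
    | succ n ih =>
      rw [pow_succ' (adjoint A), pow_succ A, pow_succ' T, mul_assoc, ← mul_assoc (adjoint A ^ n),
        ih, ← hcomm, ← mul_assoc, ← hT]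
  · intro h
    have h2 : adjoint A * T * A = T ^ 2 := by
      have := h 2
      rw [pow_two, pow_two] at this
      rw [hT] at this ⊢
      rw [← this]; noncomm_ring
    have h3 : adjoint A * T ^ 2 * A = T ^ 3 := by
      have := h 3
      have e3 : (adjoint A) ^ 3 * A ^ 3 = adjoint A * (adjoint A ^ 2 * A ^ 2) * A := by
        rw [pow_succ', pow_succ]; noncomm_ring
      rw [e3, h 2] at this
      exact this
    have amul : ∀ X Y : H →L[ℂ] H, adjoint (X * Y) = adjoint Y * adjoint X := fun X Y => by
      rw [mul_def, adjoint_comp, ← mul_def]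
    have hTsa : adjoint T = T := by
      rw [hT, amul, adjoint_adjoint]
    have hD : adjoint (T * A - A * T) * (T * A - A * T) = 0 := by
      have : adjoint (T * A - A * T) = adjoint A * T - T * adjoint A := by
        simp [map_sub, amul, hTsa]
      rw [this]
      have expand : (adjoint A * T - T * adjoint A) * (T * A - A * T)
          = adjoint A * T ^ 2 * A - (adjoint A * T * A) * T - T * (adjoint A * T * A)
            + T * (adjoint A * A) * T := by noncomm_ring
      rw [expand, h2, h3, ← hT]
      noncomm_ring
    have hDnorm : T * A - A * T = 0 := by
      have := norm_adjoint_comp_self (T * A - A * T)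
      rw [← mul_def, hD, norm_zero] at this
      have := mul_self_eq_zero.mp this.symm
      exact norm_eq_zero.mp this
    unfold Quasinormal
    rw [← hT]
    rw [sub_eq_zero] at hDnorm
    exact hDnorm.symm
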